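/- arXiv:1908.04056 — 2 statements merged into one kernel-verified Lean document; each statement's English description precedes it below -/
import Mathlib

section
/- If x is a nonempty word over A and (n_1, n_2, …, n_k) is a Nyldon factorization of x (that is, x = n_1 n_2 ⋯ n_k, each n_i is Nyldon, and n_1 ≤_lex n_2 ≤_lex ⋯ ≤_lex n_k), then n_k is the longest Nyldon suffix of x: n_k is a Nyldon suffix of x, and every suffix s of x that is Nyldon satisfies |s| ≤ |n_k|. -/
/-!
Common definitions: words over a totally ordered alphabet, lexicographic order,
Nyldon and Lyndon words, Nyldon-like sets, right Hall sets, and (circular) codes.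
-/

/-- Strict lexicographic order on words: `u <_lex v` iff `u` is a proper prefix of `v`,
or `u` and `v` first differ at a position where `u` has the smaller letter. -/
def LexLt {A : Type*} [LinearOrder A] (u v : List A) : Prop :=
  List.Lex (· < ·) u v

/-- Nonstrict lexicographic order on words. -/
def LexLe {A : Type*} [LinearOrder A] (u v : List A) : Prop :=
  u = v ∨ LexLt u v

theorem length_le_length_flatten_of_ne_nil {A : Type*} {s : List (List A)}
    (h : ∀ g ∈ s, g ≠ []) : s.length ≤ s.flatten.length := by
  induction s with
  | nil => simp
  | cons a t ih =>
    simp only [List.flatten_cons, List.length_append, List.length_cons]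
    have ha : 1 ≤ a.length := List.length_pos_iff.mpr (h a (by simp))
    have ht := ih (fun g hg => h g (List.mem_cons_of_mem _ hg))
    omega

theorem length_lt_length_flatten {A : Type*} {f : List A} {fs : List (List A)}
    (h2 : 2 ≤ fs.length) (hne : ∀ g ∈ fs, g ≠ []) (hf : f ∈ fs) :
    f.length < fs.flatten.length := by
  obtain ⟨s, t, rfl⟩ := List.append_of_mem hf
  have hs : s.length ≤ s.flatten.length :=
    length_le_length_flatten_of_ne_nil (fun g hg => hne g (by simp [hg]))
  have ht : t.length ≤ t.flatten.length :=
    length_le_length_flatten_of_ne_nil (fun g hg => hne g (by simp [hg]))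
  have hlen : 2 ≤ s.length + t.length + 1 := by
    simp only [List.length_append, List.length_cons] at h2
    omega
  have hj : (s ++ f :: t).flatten.length
      = s.flatten.length + f.length + t.flatten.length := by
    simp [List.flatten_append]
    omega
  omega

/-- A nonempty word is Nyldon if it admits no factorization into at least two
lexicographically nondecreasing Nyldon words. (Single letters are Nyldon vacuously,
since they admit no factorization into at least two nonempty words at all.) -/
def IsNyldon {A : Type*} [LinearOrder A] (w : List A) : Prop :=
  w ≠ [] ∧ ∀ fs : List (List A), 2 ≤ fs.length → (∀ g ∈ fs, g ≠ []) →
    fs.flatten = w → (∀ f ∈ fs, IsNyldon f) → fs.Chain' LexLe → False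
termination_by w.length
decreasing_by
  rename_i h2 hne hjoin hf
  subst hjoin
  exact length_lt_length_flatten h2 hne hf

/-- A nonempty word is Lyndon if it admits no factorization into at least two
lexicographically nonincreasing Lyndon words. -/
def IsLyndon {A : Type*} [LinearOrder A] (w : List A) : Prop :=
  w ≠ [] ∧ ∀ fs : List (List A), 2 ≤ fs.length → (∀ g ∈ fs, g ≠ []) →
    fs.flatten = w → (∀ f ∈ fs, IsLyndon f) →
    fs.Chain' (fun u v => LexLe v u) → False
termination_by w.length
decreasing_by
  rename_i h2 hne hjoin hf
  subst hjoin
  exact length_lt_length_flatten h2 hne hf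

/-- `fs` is a Nyldon factorization of `w`: a nondecreasing (under `≤_lex`) sequence
of Nyldon words whose concatenation is `w`. -/
def IsNyldonFactorization {A : Type*} [LinearOrder A] (fs : List (List A)) (w : List A) :
    Prop :=
  (∀ f ∈ fs, IsNyldon f) ∧ fs.Chain' LexLe ∧ fs.flatten = w

/-- The `j`-th power `u^j` of a word `u`: the concatenation of `j` copies of `u`. -/
def wordPow {A : Type*} (u : List A) (j : ℕ) : List A :=
  (List.replicate j u).flatten

/-- A word is primitive if it is not a power `u^j` of a word `u` with `j ≥ 2`. -/
def Primitive {A : Type*} (w : List A) : Prop :=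
  ∀ (u : List A) (j : ℕ), 2 ≤ j → w ≠ wordPow u j

/-- A Nyldon-like set over the alphabet `A`: a set `Mem` of nonempty words together with a
strict total order `lt` on it, such that every single letter is in the set, a word of length
at least `2` is in the set iff it admits no factorization into at least two nondecreasing
words of the set, and `f ≺ fg` whenever `f`, `g`, `fg` are all in the set. -/
structure NyldonLike (A : Type*) where
  /-- membership in `G` -/
  Mem : List A → Prop
  /-- the strict total order `≺` on `G` -/
  lt : List A → List A → Prop
  mem_ne_nil : ∀ w, Mem w → w ≠ []
  lt_irrefl : ∀ u, Mem u → ¬ lt u u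
  lt_trans : ∀ u v x, Mem u → Mem v → Mem x → lt u v → lt v x → lt u x
  lt_total : ∀ u v, Mem u → Mem v → lt u v ∨ u = v ∨ lt v u
  singleton_mem : ∀ a : A, Mem [a]
  mem_iff : ∀ w : List A, 2 ≤ w.length →
    (Mem w ↔ ¬ ∃ fs : List (List A), 2 ≤ fs.length ∧ (∀ f ∈ fs, Mem f) ∧
      fs.Chain' (fun u v => u = v ∨ lt u v) ∧ fs.flatten = w)
  append_lt : ∀ f g, Mem f → Mem g → Mem (f ++ g) → lt f (f ++ g)

namespace NyldonLike

variable {A : Type*}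

/-- The nonstrict order `⪯` associated to a Nyldon-like set. -/
def le (G : NyldonLike A) (u v : List A) : Prop :=
  u = v ∨ G.lt u v

/-- `fs` is a `G`-factorization of `w`: a nondecreasing (under `⪯`) sequence of
`G`-words whose concatenation is `w`. -/
def IsFactorization (G : NyldonLike A) (fs : List (List A)) (w : List A) : Prop :=
  (∀ f ∈ fs, G.Mem f) ∧ fs.Chain' G.le ∧ fs.flatten = w

end NyldonLike

/-- A factorization `fs` of a word written as the concatenation of `blocks` preserves the
blocks if each factor is the concatenation of a (nonempty) consecutive run of whole blocks. -/
def PreservesBlocks {A : Type*} (blocks fs : List (List A)) : Prop :=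
  ∃ P : List (List (List A)), (∀ p ∈ P, p ≠ []) ∧ P.flatten = blocks ∧
    P.map List.flatten = fs

/-- A right Hall set over the alphabet `A`: a set `Mem` of nonempty words with a strict
total order `lt` such that every nonempty word has a unique nondecreasing factorization
into words of the set, and `fg ≻ g` whenever `f`, `g`, `fg` are all in the set. -/
structure RightHallSet (A : Type*) where
  /-- membership in `H` -/
  Mem : List A → Prop
  /-- the strict total order `≺` on `H` -/
  lt : List A → List A → Prop
  mem_ne_nil : ∀ w, Mem w → w ≠ []
  lt_irrefl : ∀ u, Mem u → ¬ lt u u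
  lt_trans : ∀ u v x, Mem u → Mem v → Mem x → lt u v → lt v x → lt u x
  lt_total : ∀ u v, Mem u → Mem v → lt u v ∨ u = v ∨ lt v u
  unique_factorization : ∀ w : List A, w ≠ [] →
    ∃! fs : List (List A), (∀ f ∈ fs, Mem f) ∧
      fs.Chain' (fun u v => u = v ∨ lt u v) ∧ fs.flatten = w
  append_gt : ∀ f g, Mem f → Mem g → Mem (f ++ g) → lt g (f ++ g)

/-- A set `F` of words is a code if any two sequences of words of `F` with equal
concatenations are equal. -/
def IsCode {A : Type*} (F : List A → Prop) : Prop :=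
  ∀ l₁ l₂ : List (List A), (∀ f ∈ l₁, F f) → (∀ f ∈ l₂, F f) →
    l₁.flatten = l₂.flatten → l₁ = l₂

/-- `w ∈ F*`: `w` is a concatenation of (zero or more) words of `F`. -/
def CodeStar {A : Type*} (F : List A → Prop) (w : List A) : Prop :=
  ∃ l : List (List A), (∀ f ∈ l, F f) ∧ l.flatten = w

/-- A set `F` of words is a circular code if it is a code and whenever
`uv ∈ F*` and `vu ∈ F*`, also `u ∈ F*` and `v ∈ F*`. -/
def IsCircularCode {A : Type*} (F : List A → Prop) : Prop :=
  IsCode F ∧ ∀ u v : List A, CodeStar F (u ++ v) → CodeStar F (v ++ u) → CodeStar F u ∧ CodeStar F v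

section NyldonAux

variable {A : Type*} [LinearOrder A]

theorem isNyldon_iff (w : List A) : IsNyldon w ↔ (w ≠ [] ∧ ∀ fs : List (List A), 2 ≤ fs.length → (∀ g ∈ fs, g ≠ []) →
    fs.flatten = w → (∀ f ∈ fs, IsNyldon f) → fs.Chain' LexLe → False) := by
  rw [IsNyldon]

theorem lexLt_trans {u v w : List A} (h1 : LexLt u v) (h2 : LexLt v w) : LexLt u w := by
  have : IsTrans (List A) (List.Lex (· < ·)) := ⟨fun _ _ _ h1 h2 => List.lex_trans lt_trans h1 h2⟩
  exact this.trans _ _ _ h1 h2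

theorem lexLt_irrefl {u : List A} (h : LexLt u u) : False :=
  (List.Lex.asymm (· < ·)).asymm _ _ h h

theorem lexLt_trichot (u v : List A) : LexLt u v ∨ u = v ∨ LexLt v u :=
  by
    by_cases h1 : LexLt u v
    · exact Or.inl h1
    by_cases h2 : LexLt v u
    · exact Or.inr (Or.inr h2)
    exact Or.inr (Or.inl ((List.Lex.trichotomous (· < ·)).trichotomous u v h1 h2))

theorem lexLt_of_prefix {u v : List A} (h : u <+: v) (hne : u ≠ v) : LexLt u v := by
  obtain ⟨t, rfl⟩ := h
  induction u with
  | nil =>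
    cases t with
    | nil => simp at hne
    | cons a t => exact List.Lex.nil
  | cons a u ih =>
    exact List.Lex.cons (ih (by simpa using hne))

theorem lexLe_of_prefix {u v : List A} (h : u <+: v) : LexLe u v := by
  by_cases he : u = v
  · exact Or.inl he
  · exact Or.inr (lexLt_of_prefix h he)

theorem IsNyldon.ne_nil {w : List A} (h : IsNyldon w) : w ≠ [] :=
  ((isNyldon_iff w).mp h).1

theorem not_isNyldon {w : List A} (fs : List (List A)) (h2 : 2 ≤ fs.length)
    (hN : ∀ f ∈ fs, IsNyldon f) (hc : fs.Chain' LexLe) (hf : fs.flatten = w) :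
    ¬ IsNyldon w := by
  intro hw
  exact ((isNyldon_iff w).mp hw).2 fs h2 (fun g hg => (hN g hg).ne_nil) hf hN hc

theorem exists_nyldon_factorization (w : List A) (hw : w ≠ []) :
    ∃ fs : List (List A), fs ≠ [] ∧ (∀ f ∈ fs, IsNyldon f) ∧ fs.Chain' LexLe ∧
      fs.flatten = w := by
  by_cases h : IsNyldon w
  · exact ⟨[w], by simp, by simpa using h, List.isChain_singleton w, by simp⟩
  · rw [isNyldon_iff] at h
    push_neg at h
    obtain ⟨fs, h2, _, hflat, hN, hc, -⟩ := h hw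
    exact ⟨fs, by rintro rfl; simp at h2, hN, hc, hflat⟩

set_option linter.unusedSectionVars false

-- two suffixes of the same list, with length ≤, give suffix relation
theorem suffix_of_suffix_le {s t l : List A} (hs : s <:+ l) (ht : t <:+ l)
    (hl : s.length ≤ t.length) : s <:+ t := by
  rcases List.suffix_or_suffix_of_suffix hs ht with h | h
  · exact h
  · have := List.IsSuffix.length_le h
    have : t = s := List.IsSuffix.eq_of_length h (le_antisymm this hl)
    rw [this]

/-- Decompose a suffix of a flatten along block boundaries. -/
theorem suffix_flatten_decomp (fs : List (List A)) (s : List A) (hs : s <:+ fs.flatten) :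
    (∃ gs : List (List A), gs <:+ fs ∧ gs.flatten = s) ∨
    (∃ (u g : List A) (gs : List (List A)), (g :: gs) <:+ fs ∧ u <:+ g ∧ u ≠ [] ∧ u ≠ g ∧
      u ++ gs.flatten = s) := by
  induction fs with
  | nil =>
    left
    simp only [List.flatten_nil, List.suffix_nil] at hs
    exact ⟨[], by simp, by simp [hs]⟩
  | cons f fs ih =>
    simp only [List.flatten_cons] at hs
    by_cases hl : s.length ≤ fs.flatten.length
    · have hs' : s <:+ fs.flatten :=
        suffix_of_suffix_le hs (List.suffix_append f fs.flatten) hl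
      rcases ih hs' with ⟨gs, h1, h2⟩ | ⟨u, g, gs, h1, h2, h3, h4, h5⟩
      · exact Or.inl ⟨gs, h1.trans (List.suffix_cons f fs), h2⟩
      · exact Or.inr ⟨u, g, gs, h1.trans (List.suffix_cons f fs), h2, h3, h4, h5⟩
    · push_neg at hl
      obtain ⟨t, ht⟩ := hs
      have h1 : t ++ s = f ++ fs.flatten := ht
      have h2 : t.length ≤ f.length := by
        have := congrArg List.length h1
        simp only [List.length_append] at this
        omega
      have htf : t <+: f :=
        List.prefix_of_prefix_length_le ⟨s, h1⟩ (List.prefix_append f _) h2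
      obtain ⟨u, hu⟩ := htf
      have hsu : s = u ++ fs.flatten := by
        rw [← hu, List.append_assoc] at h1
        exact (List.append_cancel_left h1)
      have hune : u ≠ [] := by
        intro h
        rw [h, List.nil_append] at hsu
        rw [hsu] at hl
        omega
      by_cases huf : u = f
      · left
        exact ⟨f :: fs, List.suffix_refl _, by simp [hsu, huf]⟩
      · right
        exact ⟨u, f, fs, List.suffix_refl _, ⟨t, hu⟩, hune, huf, hsu.symm⟩

/-- A nonempty suffix of `fs' ++ [nk]` ends with `nk`. -/
theorem suffix_concat_structure {gs fs' : List (List A)} {nk : List A}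
    (h : gs <:+ fs' ++ [nk]) (hne : gs ≠ []) :
    ∃ hs : List (List A), hs <:+ fs' ∧ gs = hs ++ [nk] := by
  obtain ⟨t, ht⟩ := h
  have h2 : gs.getLast hne = nk := by
    have hg : (t ++ gs).getLast? = gs.getLast? := List.getLast?_append_of_ne_nil t hne
    rw [ht, List.getLast?_concat] at hg
    have hg2 : gs.getLast? = some (gs.getLast hne) := List.getLast?_eq_getLast hne
    rw [hg2] at hg
    exact (Option.some_injective _ hg.symm)
  have h1 : gs = gs.dropLast ++ [nk] := by
    conv_lhs => rw [← List.dropLast_append_getLast hne, h2]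
  refine ⟨gs.dropLast, ?_, h1⟩
  rw [h1, ← List.append_assoc] at ht
  exact ⟨t, List.append_cancel_right ht⟩

theorem suffix_append_right {u g r : List A} (h : u <:+ g) : u ++ r <:+ g ++ r := by
  obtain ⟨q, rfl⟩ := h
  exact ⟨q, (List.append_assoc q u r).symm⟩

theorem length_lt_of_proper_suffix {u g : List A} (h : u <:+ g) (hne : u ≠ g) :
    u.length < g.length := by
  rcases lt_or_eq_of_le h.length_le with h' | h'
  · exact h'
  · exact absurd (h.eq_of_length h') hne

theorem flatten_pos {ts : List (List A)} (hne : ts ≠ [])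
    (hN : ∀ f ∈ ts, IsNyldon f) : 1 ≤ ts.flatten.length := by
  have h1 : ts.length ≤ ts.flatten.length :=
    length_le_length_flatten_of_ne_nil (fun g hg => (hN g hg).ne_nil)
  have : 1 ≤ ts.length := List.length_pos_iff.mpr hne
  omega

theorem lexLt_of_not_le {u v : List A} (h : ¬ LexLe u v) : LexLt v u := by
  rcases lexLt_trichot u v with h' | h' | h'
  · exact absurd (Or.inr h') h
  · exact absurd (Or.inl h') h
  · exact h'

theorem getLast?_concat' (us₀ : List (List A)) (ul : List A) :
    (us₀ ++ [ul]).getLast? = some ul := by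
  simp

theorem exists_concat_of_ne_nil {l : List (List A)} (h : l ≠ []) :
    ∃ (l' : List (List A)) (a : List A), l = l' ++ [a] := by
  rcases List.eq_nil_or_concat l with rfl | ⟨l', a, h'⟩
  · exact absurd rfl h
  · exact ⟨l', a, by simpa [List.concat_eq_append] using h'⟩

theorem core (n : ℕ) :
    (∀ x : List A, x.length ≤ n → ∀ (fs' : List (List A)) (nk : List A),
      (∀ f ∈ fs' ++ [nk], IsNyldon f) → (fs' ++ [nk]).Chain' LexLe →
      (fs' ++ [nk]).flatten = x →
      ∀ s : List A, s <:+ x → IsNyldon s → s.length ≤ nk.length) ∧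
    (∀ w : List A, w.length ≤ n → ∀ s : List A, IsNyldon w → IsNyldon s →
      s <:+ w → s ≠ w → ¬ LexLt w s) := by
  induction n using Nat.strong_induction_on with
  | _ n IH =>
  -- LemB with fuel d on the prefix length
  have lemB : ∀ w : List A, w.length ≤ n → ∀ d : ℕ, ∀ s : List A,
      w.length - s.length ≤ d → IsNyldon w → IsNyldon s → s <:+ w → s ≠ w →
      ¬ LexLt w s := by
    intro w hwn d
    induction d with
    | zero =>
      intro s hd hNw hNs hsuf hne _
      exact hne (hsuf.eq_of_length (by have := hsuf.length_le; omega))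
    | succ d ihd =>
      intro s hd hNw hNs hsuf hne hws
      obtain ⟨p, hp⟩ := hsuf
      have hpne : p ≠ [] := by rintro rfl; exact hne hp
      obtain ⟨ps, hpsne, hpsN, hpsc, hpsflat⟩ := exists_nyldon_factorization p hpne
      obtain ⟨ps', pm, rfl⟩ := exists_concat_of_ne_nil hpsne
      have hpmN : IsNyldon pm := hpsN pm (by simp)
      have hsne : s ≠ [] := hNs.ne_nil
      have hslen : 1 ≤ s.length := List.length_pos_iff.mpr hsne
      -- chain (ps' ++ [pm]) ++ [s] fails at junction
      have hjunc : ¬ LexLe pm s := by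
        intro hle
        have hch : ((ps' ++ [pm]) ++ [s]).Chain' LexLe := by
          show List.IsChain _ _; rw [List.isChain_append]
          refine ⟨hpsc, List.isChain_singleton s, ?_⟩
          intro a ha b hb
          rw [getLast?_concat'] at ha
          simp only [List.head?_cons, Option.mem_def, Option.some.injEq] at ha hb
          rw [← ha, ← hb]
          exact hle
        refine not_isNyldon ((ps' ++ [pm]) ++ [s]) (by simp) ?_ hch ?_ hNw
        · intro f hf
          rcases List.mem_append.mp hf with hf | hf
          · exact hpsN f hf
          · simp only [List.mem_singleton] at hf; rw [hf]; exact hNs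
        · rw [List.flatten_append, hpsflat]
          simpa using hp
      have hspm : LexLt s pm := lexLt_of_not_le hjunc
      rcases List.eq_nil_or_concat ps' with rfl | hps'ne
      · -- pm = p, p proper prefix of w
        simp only [List.nil_append, List.flatten_cons, List.flatten_nil,
          List.append_nil] at hpsflat
        have hpw : LexLt p w := lexLt_of_prefix ⟨s, hp⟩ (by
          intro h; rw [h] at hp
          have h2 : w ++ s = w ++ [] := by simpa using hp
          exact hNs.ne_nil (List.append_cancel_left h2))
        rw [hpsflat] at hspm
        exact lexLt_irrefl (lexLt_trans (lexLt_trans hpw hws) hspm)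
      · -- ps' ≠ []
        have hps'ne2 : ps' ≠ [] := by
          obtain ⟨l, a, h'⟩ := hps'ne; rw [h']; simp
        have hps'len : 1 ≤ ps'.flatten.length :=
          flatten_pos hps'ne2 (fun f hf => hpsN f (by simp [hf]))
        have hpflat : ps'.flatten ++ pm = p := by
          simpa using hpsflat
        have hpmlen : 1 ≤ pm.length := List.length_pos_iff.mpr hpmN.ne_nil
        have hw1 : ps'.flatten ++ (pm ++ s) = w := by
          rw [← List.append_assoc, hpflat, hp]
        have hwlen : ps'.flatten.length + (pm.length + s.length) = w.length := by
          have := congrArg List.length hw1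
          simpa [List.length_append] using this
        have hs1suf : pm ++ s <:+ w := ⟨ps'.flatten, hw1⟩
        have hs1ne : pm ++ s ≠ w := by
          intro h
          have := congrArg List.length h
          simp only [List.length_append] at this
          omega
        have hws1 : LexLt w (pm ++ s) := by
          refine lexLt_trans (lexLt_trans hws hspm) ?_
          exact lexLt_of_prefix ⟨s, rfl⟩ (by
            intro h
            have := congrArg List.length h
            simp only [List.length_append] at this
            omega)
        by_cases hN1 : IsNyldon (pm ++ s)
        · exact ihd (pm ++ s) (by simp only [List.length_append]; omega)
            hNw hN1 hs1suf hs1ne hws1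
        · have hs1nenil : pm ++ s ≠ [] := by simp [hsne]
          obtain ⟨vs, hvsne, hvsN, hvsc, hvsflat⟩ :=
            exists_nyldon_factorization (pm ++ s) hs1nenil
          obtain ⟨vs', vr, rfl⟩ := exists_concat_of_ne_nil hvsne
          have hvrN : IsNyldon vr := hvsN vr (by simp)
          rcases List.eq_nil_or_concat vs' with rfl | hvs'ne
          · simp only [List.nil_append, List.flatten_cons, List.flatten_nil,
              List.append_nil] at hvsflat
            rw [hvsflat] at hvrN
            exact hN1 hvrN
          have hvs'ne2 : vs' ≠ [] := by obtain ⟨l, a, h'⟩ := hvs'ne; rw [h']; simp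
          have hvflat : vs'.flatten ++ vr = pm ++ s := by simpa using hvsflat
          have hvs'len : 1 ≤ vs'.flatten.length :=
            flatten_pos hvs'ne2 (fun f hf => hvsN f (by simp [hf]))
          -- Main at |pm ++ s| < n
          have hmain := (IH (pm ++ s).length
            (by simp only [List.length_append]; omega)).1 (pm ++ s) le_rfl vs' vr
            hvsN hvsc hvsflat
          have hsvr : s.length ≤ vr.length :=
            hmain s ⟨pm, rfl⟩ hNs
          have hvrsuf : vr <:+ pm ++ s := ⟨vs'.flatten, hvflat⟩
          rcases eq_or_lt_of_le hsvr with heq | hlt2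
          · -- vr = s
            have hsvr' : s <:+ vr := suffix_of_suffix_le ⟨pm, rfl⟩ hvrsuf (le_of_eq heq)
            have hvr_s : s = vr := hsvr'.eq_of_length heq
            rw [← hvr_s] at hvflat hvsc hvsflat
            have hpmflat : vs'.flatten = pm :=
              (List.append_inj' hvflat rfl).1
            obtain ⟨vs'', v1, rfl⟩ := exists_concat_of_ne_nil hvs'ne2
            rcases List.eq_nil_or_concat vs'' with rfl | hvs''ne
            · -- vs = [v1, s] with v1 = pm
              simp only [List.nil_append, List.flatten_cons, List.flatten_nil,
                List.append_nil] at hpmflat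
              subst hpmflat
              have hch2 : LexLe v1 s := by
                have h' : List.Chain' LexLe [v1, s] := by simpa using hvsc
                exact (List.isChain_cons_cons.mp h').1
              rcases hch2 with h | h
              · rw [← h] at hspm; exact lexLt_irrefl hspm
              · exact lexLt_irrefl (lexLt_trans h hspm)
            · -- ≥ 2 factors of pm : contradicts pm Nyldon
              have hvs''ne2 : vs'' ≠ [] := by obtain ⟨l, a, h'⟩ := hvs''ne; rw [h']; simp
              refine not_isNyldon (vs'' ++ [v1]) ?_ ?_ ?_ hpmflat hpmN
              · have : 1 ≤ vs''.length := List.length_pos_iff.mpr hvs''ne2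
                simp only [List.length_append, List.length_singleton]
                omega
              · intro f hf
                exact hvsN f (by simp only [List.mem_append] at hf ⊢; tauto)
              · exact hvsc.prefix ⟨[s], by simp⟩
          · -- |s| < |vr| : recurse with vr
            have hsvrsuf : s <:+ vr := suffix_of_suffix_le ⟨pm, rfl⟩ hvrsuf (le_of_lt hlt2)
            have hsvrne : s ≠ vr := by intro h; rw [h] at hlt2; omega
            have hvrlt : vr.length < w.length := by
              have h1 : vr.length ≤ (pm ++ s).length := hvrsuf.length_le
              simp only [List.length_append] at h1
              omega
            -- LemB at smaller length: ¬ LexLt vr s, hence LexLt s vr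
            have hlemB := (IH vr.length (by omega)).2 vr le_rfl s hvrN hNs hsvrsuf hsvrne
            have hsvrlt : LexLt s vr := by
              rcases lexLt_trichot s vr with h | h | h
              · exact h
              · exact absurd h hsvrne
              · exact absurd h hlemB
            have hwvr : LexLt w vr := lexLt_trans hws hsvrlt
            have hvrsufw : vr <:+ w := hvrsuf.trans hs1suf
            have hvrnew : vr ≠ w := by intro h; rw [h] at hvrlt; omega
            exact ihd vr (by omega) hNw hvrN hvrsufw hvrnew hwvr
  refine ⟨?_, fun w hw s hNw hNs hsuf hne =>
    lemB w hw w.length s (by omega) hNw hNs hsuf hne⟩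
  intro x hx fs' nk hN hc hflat s hsuf hsN
  by_contra hlt
  push_neg at hlt
  have hsuf' : s <:+ (fs' ++ [nk]).flatten := by rw [hflat]; exact hsuf
  rcases suffix_flatten_decomp (fs' ++ [nk]) s hsuf' with
    ⟨gs, hgs, hgsflat⟩ | ⟨u, g, gs, hsub, husuf, hune, hug, hflat2⟩
  · -- s is a concatenation of whole blocks
    have hgsne : gs ≠ [] := by
      rintro rfl
      exact hsN.ne_nil hgsflat.symm
    obtain ⟨hs, hhs, hgseq⟩ := suffix_concat_structure hgs hgsne
    by_cases hhs0 : hs = []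
    · subst hhs0
      rw [hgseq] at hgsflat
      simp only [List.nil_append, List.flatten_cons, List.flatten_nil,
        List.append_nil] at hgsflat
      rw [← hgsflat] at hlt
      omega
    · have h2 : 2 ≤ gs.length := by
        rw [hgseq]
        have : 1 ≤ hs.length := List.length_pos_iff.mpr hhs0
        simp only [List.length_append, List.length_singleton]
        omega
      exact not_isNyldon gs h2 (fun f hf => hN f (hgs.sublist.subset hf))
        (hc.suffix hgs) hgsflat hsN
  · -- s = u ++ gs.flatten with u a proper nonempty suffix of block g
    have hmemg : IsNyldon g := hN g (hsub.sublist.subset (by simp))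
    have hulen : u.length < g.length := length_lt_of_proper_suffix husuf hug
    by_cases hgs0 : gs = []
    · subst hgs0
      simp only [List.flatten_nil, List.append_nil] at hflat2
      obtain ⟨hs, hhs, heq⟩ := suffix_concat_structure hsub (by simp)
      have hhs0 : hs = [] := by
        cases hs with
        | nil => rfl
        | cons a l =>
          have := congrArg List.length heq
          simp at this
      subst hhs0
      simp only [List.nil_append, List.cons.injEq] at heq
      rw [heq.1] at hulen
      rw [← hflat2] at hlt
      omega
    · obtain ⟨hs, hhs, heq⟩ := suffix_concat_structure hsub (by simp)
      cases hs with
      | nil =>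
        simp only [List.nil_append, List.cons.injEq] at heq
        exact hgs0 heq.2
      | cons a hs' =>
        simp only [List.cons_append, List.cons.injEq] at heq
        obtain ⟨rfl, hgseq⟩ := heq
        obtain ⟨t, htfs⟩ := hsub
        by_cases ht0 : t = []
        · -- the decomposition starts at the first block: fs' ++ [nk] = g :: gs
          subst ht0
          simp only [List.nil_append] at htfs
          cases gs with
          | nil => exact hgs0 rfl
          | cons n2 gs'' =>
            have hc' : (g :: n2 :: gs'').Chain' LexLe := by rw [htfs]; exact hc
            have hn2N : IsNyldon n2 := hN n2 (by rw [← htfs]; simp)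
            obtain ⟨us, husne, husN, husc, husflat⟩ := exists_nyldon_factorization u hune
            obtain ⟨us₀, ul, rfl⟩ := exists_concat_of_ne_nil husne
            have hulN : IsNyldon ul := husN ul (by simp)
            have hjunc : ¬ LexLe ul n2 := by
              intro hle
              have hch : ((us₀ ++ [ul]) ++ (n2 :: gs'')).Chain' LexLe := by
                show List.IsChain _ _; rw [List.isChain_append]
                refine ⟨husc, (List.isChain_cons_cons.mp hc').2, ?_⟩
                intro a ha b hb
                rw [getLast?_concat'] at ha
                simp only [List.head?_cons, Option.mem_def, Option.some.injEq] at ha hb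
                rw [← ha, ← hb]
                exact hle
              refine not_isNyldon ((us₀ ++ [ul]) ++ (n2 :: gs'')) ?_ ?_ hch ?_ hsN
              · simp only [List.length_append, List.length_singleton, List.length_cons]
                omega
              · intro f hf
                rcases List.mem_append.mp hf with hf | hf
                · exact husN f hf
                · refine hN f ?_
                  rw [← htfs]
                  exact List.mem_cons_of_mem g hf
              · rw [List.flatten_append, husflat]
                exact hflat2
            have hn2ul : LexLt n2 ul := lexLt_of_not_le hjunc
            have hgn2 : LexLe g n2 := (List.isChain_cons_cons.mp hc').1
            have hgul : LexLt g ul := by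
              rcases hgn2 with h | h
              · rw [h]; exact hn2ul
              · exact lexLt_trans h hn2ul
            have hulsuf : ul <:+ u := ⟨us₀.flatten, by simpa using husflat⟩
            have hulg : ul <:+ g := hulsuf.trans husuf
            have hulneg : ul ≠ g := by
              intro h
              have := hulsuf.length_le
              rw [h] at this
              omega
            have hglen : g.length < x.length := by
              have hx1 : g ++ (n2 :: gs'').flatten = x := by
                rw [← hflat, ← htfs]
                simp
              have h1 : 1 ≤ (n2 :: gs'').flatten.length := by
                refine flatten_pos (by simp) (fun f hf => hN f ?_)
                rw [← htfs]
                exact List.mem_cons_of_mem g hf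
              have := congrArg List.length hx1
              simp only [List.length_append] at this
              omega
            exact lemB g (by omega) g.length ul (by omega) hmemg hulN hulg hulneg hgul
        · -- drop the blocks before g and use the induction hypothesis
          have htN : ∀ f ∈ t, IsNyldon f := fun f hf =>
            hN f (by rw [← htfs]; exact List.mem_append_left _ hf)
          have htlen : 1 ≤ t.flatten.length := flatten_pos ht0 htN
          have hx'flat : t.flatten ++ (g :: gs).flatten = x := by
            rw [← hflat, ← htfs, List.flatten_append]
          have hx'len : (g :: gs).flatten.length < x.length := by
            have := congrArg List.length hx'flat
            simp only [List.length_append] at this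
            omega
          have hgcons : (g :: hs') ++ [nk] = g :: gs := by
            simp [hgseq]
          have hsubfix : (g :: gs) <:+ fs' ++ [nk] := ⟨t, htfs⟩
          have hmain := (IH (g :: gs).flatten.length (by omega)).1
            (g :: gs).flatten le_rfl (g :: hs') nk
            (by rw [hgcons]; exact fun f hf => hN f (List.IsSuffix.sublist hsubfix |>.subset hf))
            (by rw [hgcons]; exact hc.suffix hsubfix)
            (by rw [hgcons])
            s (by rw [List.flatten_cons, ← hflat2]; exact suffix_append_right husuf) hsN
          omega

theorem stmt_1' {A : Type*} [LinearOrder A]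
    (x : List A) (hx : x ≠ []) (fs : List (List A)) (hfs : fs ≠ [])
    (hfac : IsNyldonFactorization fs x) :
    fs.getLast hfs <:+ x ∧ IsNyldon (fs.getLast hfs) ∧
      ∀ s : List A, s <:+ x → IsNyldon s → s.length ≤ (fs.getLast hfs).length := by
  obtain ⟨hNall, hchain, hflat⟩ := hfac
  obtain ⟨fs₀, nk, heq⟩ := exists_concat_of_ne_nil hfs
  have hlast : fs.getLast hfs = nk := by
    subst heq
    exact List.getLast_append _
  rw [hlast]
  refine ⟨⟨fs₀.flatten, ?_⟩, hNall nk (by simp [heq]), ?_⟩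
  · rw [← hflat, heq]
    simp
  · intro s hsuf hsN
    exact (core x.length).1 x le_rfl fs₀ nk (heq ▸ hNall) (heq ▸ hchain)
      (by rw [← heq]; exact hflat) s hsuf hsN

end NyldonAux

/-- If `fs` is a Nyldon factorization of a nonempty word `x`, then its last
factor is a Nyldon suffix of `x`, and it is the longest one. -/
theorem stmt_1 {A : Type*} [LinearOrder A] [Fintype A] (hA : 2 ≤ Fintype.card A)
    (x : List A) (hx : x ≠ []) (fs : List (List A)) (hfs : fs ≠ [])
    (hfac : IsNyldonFactorization fs x) :
    fs.getLast hfs <:+ x ∧ IsNyldon (fs.getLast hfs) ∧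
      ∀ s : List A, s <:+ x → IsNyldon s → s.length ≤ (fs.getLast hfs).length := by
  exact stmt_1' x hx fs hfs hfac
end

section
/- Let (G, ≺) be a Nyldon-like set over A. Then: (a) if (u_1, u_2, …, u_k) is a G-factorization of a nonempty word x, then u_k is the longest suffix of x lying in G (every suffix s of x with s ∈ G satisfies |s| ≤ |u_k|); and (b) if x ∈ G and s is a proper nonempty suffix of x with s ∈ G, then s ≺ x. -/
section StmtEightAux

variable {A : Type*} [LinearOrder A]

lemma suffix_of_suffix_length_le' {s₁ s₂ w : List A} (h1 : s₁ <:+ w) (h2 : s₂ <:+ w)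
    (h : s₁.length ≤ s₂.length) : s₁ <:+ s₂ := by
  rw [← List.reverse_prefix] at h1 h2 ⊢
  exact List.prefix_of_prefix_length_le h1 h2 (by simpa using h)

lemma getLast_suffix_flatten {l : List (List A)} (h : l ≠ []) :
    l.getLast h <:+ l.flatten := by
  refine ⟨l.dropLast.flatten, ?_⟩
  conv_rhs => rw [← List.dropLast_append_getLast h]
  simp

lemma dropLast_flatten_append_getLast {l : List (List A)} (h : l ≠ []) :
    l.dropLast.flatten ++ l.getLast h = l.flatten := by
  conv_rhs => rw [← List.dropLast_append_getLast h]
  simp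

lemma suffix_flatten_decomp_s8 : ∀ (l : List (List A)) (s : List A), s <:+ l.flatten → s ≠ [] →
    ∃ l₁ u y l₂, l = l₁ ++ u :: l₂ ∧ y <:+ u ∧ y ≠ [] ∧ s = y ++ l₂.flatten := by
  intro l
  induction l with
  | nil =>
    intro s hs hne
    simp only [List.flatten_nil, List.suffix_nil] at hs
    exact absurd hs hne
  | cons u t ih =>
    intro s hs hne
    simp only [List.flatten_cons] at hs
    by_cases hlen : s.length ≤ t.flatten.length
    · have hst : s <:+ t.flatten :=
        suffix_of_suffix_length_le' hs (List.suffix_append _ _) (by simpa using hlen)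
      obtain ⟨l₁, u', y, l₂, he, h1, h2, h3⟩ := ih s hst hne
      exact ⟨u :: l₁, u', y, l₂, by rw [he]; rfl, h1, h2, h3⟩
    · push_neg at hlen
      have htf : t.flatten <:+ s :=
        suffix_of_suffix_length_le' (List.suffix_append _ _) hs (le_of_lt hlen)
      obtain ⟨y, hy⟩ := htf
      obtain ⟨r, hr⟩ := hs
      rw [← hy, ← List.append_assoc] at hr
      have hru : r ++ y = u := List.append_cancel_right hr
      have hyne : y ≠ [] := by
        intro h
        rw [h, List.nil_append] at hy
        rw [← hy] at hlen
        exact lt_irrefl _ hlen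
      exact ⟨[], u, y, t, rfl, ⟨r, hru⟩, hyne, hy.symm⟩

variable (G : NyldonLike A)

lemma nyldon_exists_factorization (w : List A) (hw : w ≠ []) :
    ∃ fs, fs ≠ [] ∧ G.IsFactorization fs w := by
  by_cases hmem : G.Mem w
  · refine ⟨[w], by simp, ?_, ?_, by simp⟩
    · intro f hf; simp at hf; rwa [hf]
    · exact List.isChain_singleton w
  · have h2 : 2 ≤ w.length := by
      rcases w with _ | ⟨a, _ | ⟨b, t⟩⟩
      · exact absurd rfl hw
      · exact absurd (G.singleton_mem a) hmem
      · simp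
    have hE := not_not.mp (fun hE => hmem ((G.mem_iff w h2).mpr hE))
    obtain ⟨fs, hlen, hmemf, hchain, hflat⟩ := hE
    refine ⟨fs, by intro h; rw [h] at hlen; simp at hlen, hmemf, hchain, hflat⟩

lemma nyldon_key : ∀ n : ℕ,
    (∀ x : List A, x.length ≤ n → ∀ fs (hfs : fs ≠ []), G.IsFactorization fs x →
      ∀ s, s <:+ x → G.Mem s → s.length ≤ (fs.getLast hfs).length) ∧
    (∀ x s : List A, x.length ≤ n → G.Mem x → G.Mem s → s <:+ x → s ≠ x → G.lt s x) := by
  intro n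
  induction n using Nat.strong_induction_on with
  | _ n ih =>
  have hSA : ∀ x : List A, x.length ≤ n → ∀ fs (hfs : fs ≠ []), G.IsFactorization fs x →
      ∀ s, s <:+ x → G.Mem s → s.length ≤ (fs.getLast hfs).length := by
    intro x hxn fs hfs hfac s hsx hsm
    obtain ⟨hmemf, hchain, hflat⟩ := hfac
    by_contra hlt
    push_neg at hlt
    have hsne : s ≠ [] := G.mem_ne_nil s hsm
    subst hflat
    obtain ⟨l₁, u, y, l₂, hfs_eq, hyu, hyne, hs_eq⟩ := suffix_flatten_decomp_s8 fs s hsx hsne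
    subst hfs_eq
    have humem : G.Mem u := hmemf u (by simp)
    have hune : u ≠ [] := G.mem_ne_nil u humem
    rcases l₂ with _ | ⟨u', t⟩
    · -- s is a suffix of the last factor u : contradiction with hlt
      have hlast : (l₁ ++ [u]).getLast hfs = u := by
        rw [List.getLast_append]; simp
      rw [hlast] at hlt
      have : s.length ≤ u.length := by
        rw [hs_eq]; simpa using hyu.length_le
      omega
    · -- s = y ++ (u' :: t).flatten with y a nonempty suffix of u
      have hu'mem : G.Mem u' := hmemf u' (by simp)
      have hu'ne : u' ≠ [] := G.mem_ne_nil u' hu'mem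
      have hchain_ul₂ : List.Chain' G.le (u :: u' :: t) :=
        (List.isChain_append.mp hchain).2.1
      have huu' : G.le u u' := (List.isChain_cons_cons.mp hchain_ul₂).1
      have hflpos : 0 < (u' :: t).flatten.length := by
        simp only [List.flatten_cons, List.length_append]
        have := List.length_pos_iff.mpr hu'ne
        omega
      have hs2 : 2 ≤ s.length := by
        rw [hs_eq, List.length_append]
        have := List.length_pos_iff.mpr hyne
        omega
      have hnotmem := (G.mem_iff s hs2).mp hsm
      by_cases hyeq : y = u
      · exact hnotmem ⟨u :: u' :: t, by simp, fun f hf => hmemf f (by simp at hf ⊢; tauto),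
          hchain_ul₂, by rw [hs_eq, hyeq]; rfl⟩
      · have hylt : y.length < u.length :=
          lt_of_le_of_ne hyu.length_le (fun h => hyeq (hyu.eq_of_length h))
        obtain ⟨ys, hysne, hysmem, hyschain, hysflat⟩ := nyldon_exists_factorization G y hyne
        have hybmem : G.Mem (ys.getLast hysne) := hysmem _ (List.getLast_mem hysne)
        have hyby : ys.getLast hysne <:+ y := by
          rw [← hysflat]; exact getLast_suffix_flatten hysne
        have hnotle : ¬ G.le (ys.getLast hysne) u' := by
          intro hle
          apply hnotmem
          refine ⟨ys ++ u' :: t, ?_, ?_, ?_, ?_⟩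
          · have := List.length_pos_iff.mpr hysne
            simp only [List.length_append, List.length_cons]; omega
          · intro f hf
            rcases List.mem_append.mp hf with h | h
            · exact hysmem f h
            · exact hmemf f (by simp at h ⊢; tauto)
          · apply List.isChain_append.mpr
            refine ⟨hyschain, hchain_ul₂.tail, ?_⟩
            intro a ha b hb
            rw [List.getLast?_eq_getLast hysne] at ha
            simp at ha hb
            rw [← ha, ← hb]; exact hle
          · rw [List.flatten_append, hysflat, hs_eq]
        have hu'yb : G.lt u' (ys.getLast hysne) := by
          rcases G.lt_total (ys.getLast hysne) u' hybmem hu'mem with h | h | h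
          · exact absurd (Or.inr h) hnotle
          · exact absurd (Or.inl h) hnotle
          · exact h
        have hulen : u.length < (l₁ ++ u :: u' :: t).flatten.length :=
          length_lt_length_flatten (by simp only [List.length_append, List.length_cons]; omega)
            (fun g hg => G.mem_ne_nil g (hmemf g hg)) (by simp)
        have hybne : ys.getLast hysne ≠ u := by
          intro h
          have := hyby.length_le
          rw [h] at this
          omega
        have hybu : G.lt (ys.getLast hysne) u :=
          (ih u.length (by omega)).2 u (ys.getLast hysne) le_rfl humem hybmem
            (hyby.trans hyu) hybne
        rcases huu' with h | h
        · exact G.lt_irrefl u humem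
            (G.lt_trans u (ys.getLast hysne) u humem hybmem humem (h ▸ hu'yb) hybu)
        · exact G.lt_irrefl u humem
            (G.lt_trans u (ys.getLast hysne) u humem hybmem humem
              (G.lt_trans u u' (ys.getLast hysne) humem hu'mem hybmem h hu'yb) hybu)
  refine ⟨hSA, ?_⟩
  have main : ∀ c, ∀ x s : List A, x.length ≤ n → x.length - s.length ≤ c →
      G.Mem x → G.Mem s → s <:+ x → s ≠ x → G.lt s x := by
    intro c
    induction c using Nat.strong_induction_on with
    | _ c ihc =>
    intro x s hxn hc hxm hsm hsx hne
    obtain ⟨p, rfl⟩ := hsx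
    have hpne : p ≠ [] := by rintro rfl; simp at hne
    have hsne : s ≠ [] := G.mem_ne_nil s hsm
    obtain ⟨ps, hpsne, hfac⟩ := nyldon_exists_factorization G p hpne
    obtain ⟨hpsmem, hpschain, hpsflat⟩ := hfac
    have hpmmem : G.Mem (ps.getLast hpsne) := hpsmem _ (List.getLast_mem hpsne)
    have hx2 : 2 ≤ (p ++ s).length := by
      rw [List.length_append]
      have := List.length_pos_iff.mpr hpne
      have := List.length_pos_iff.mpr hsne
      omega
    have hnotmemx := (G.mem_iff _ hx2).mp hxm
    have hnotle : ¬ G.le (ps.getLast hpsne) s := by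
      intro hle
      apply hnotmemx
      refine ⟨ps ++ [s], ?_, ?_, ?_, ?_⟩
      · have := List.length_pos_iff.mpr hpsne
        simp only [List.length_append, List.length_cons]; omega
      · intro f hf
        rcases List.mem_append.mp hf with h | h
        · exact hpsmem f h
        · simp at h; rwa [h]
      · apply List.isChain_append.mpr
        refine ⟨hpschain, List.isChain_singleton s, ?_⟩
        intro a ha b hb
        rw [List.getLast?_eq_getLast hpsne] at ha
        simp at ha hb
        rw [← ha, ← hb]; exact hle
      · rw [List.flatten_append, hpsflat]; simp
    have hspm : G.lt s (ps.getLast hpsne) := by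
      rcases G.lt_total (ps.getLast hpsne) s hpmmem hsm with h | h | h
      · exact absurd (Or.inr h) hnotle
      · exact absurd (Or.inl h) hnotle
      · exact h
    rcases Nat.lt_or_ge ps.length 2 with h1 | h2
    · -- single factor: p itself is in G
      have hps1 : ps.length = 1 := by
        have := List.length_pos_iff.mpr hpsne; omega
      obtain ⟨p1, rfl⟩ := List.length_eq_one_iff.mp hps1
      have hp1 : p1 = p := by simpa using hpsflat
      have hpmem : G.Mem p := hp1 ▸ hpsmem p1 (by simp)
      have hpm_eq : ([p1].getLast hpsne) = p := by simpa using hp1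
      rw [hpm_eq] at hspm
      exact G.lt_trans s p (p ++ s) hsm hpmem hxm hspm (G.append_lt p s hpmem hsm hxm)
    · -- at least two factors
      have hpm_suffix : (ps.getLast hpsne) <:+ p := hpsflat ▸ getLast_suffix_flatten hpsne
      have hw'x : (ps.getLast hpsne) ++ s <:+ p ++ s := by
        obtain ⟨r, hr⟩ := hpm_suffix
        exact ⟨r, by rw [← List.append_assoc, hr]⟩
      have hpsnil : ∀ g ∈ ps, g ≠ [] := fun g hg => G.mem_ne_nil g (hpsmem g hg)
      have hpmlt : (ps.getLast hpsne).length < p.length := by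
        have := length_lt_length_flatten h2 hpsnil (List.getLast_mem hpsne)
        rwa [hpsflat] at this
      have hw'len : ((ps.getLast hpsne) ++ s).length < (p ++ s).length := by
        simp only [List.length_append]; omega
      have hw'2 : 2 ≤ ((ps.getLast hpsne) ++ s).length := by
        rw [List.length_append]
        have := List.length_pos_iff.mpr hsne
        have := List.length_pos_iff.mpr (G.mem_ne_nil _ hpmmem)
        omega
      have hdlne : ps.dropLast ≠ [] := by
        have hl : ps.dropLast.length = ps.length - 1 := List.length_dropLast
        intro h; rw [h] at hl; simp at hl; omega
      have hjun : G.le (ps.dropLast.getLast hdlne) (ps.getLast hpsne) := by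
        have h := hpschain
        rw [← List.dropLast_append_getLast hpsne] at h
        obtain ⟨-, -, hj⟩ := List.isChain_append.mp h
        exact hj _ (List.getLast?_eq_getLast hdlne) _ rfl
      by_cases hw'mem : G.Mem ((ps.getLast hpsne) ++ s)
      · exfalso
        have hpmw' : G.lt (ps.getLast hpsne) ((ps.getLast hpsne) ++ s) :=
          G.append_lt _ s hpmmem hsm hw'mem
        apply hnotmemx
        refine ⟨ps.dropLast ++ [(ps.getLast hpsne) ++ s], ?_, ?_, ?_, ?_⟩
        · have hl : ps.dropLast.length = ps.length - 1 := List.length_dropLast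
          simp only [List.length_append, List.length_cons]; omega
        · intro f hf
          rcases List.mem_append.mp hf with h | h
          · exact hpsmem f (List.dropLast_sublist ps |>.subset h)
          · simp at h; rwa [h]
        · apply List.isChain_append.mpr
          refine ⟨?_, List.isChain_singleton _, ?_⟩
          · have h := hpschain
            rw [← List.dropLast_append_getLast hpsne] at h
            exact (List.isChain_append.mp h).1
          · intro a ha b hb
            rw [List.getLast?_eq_getLast hdlne] at ha
            simp at ha hb
            rw [← ha, ← hb]
            rcases hjun with h | h
            · exact Or.inr (h ▸ hpmw')
            · exact Or.inr (G.lt_trans _ _ _ (hpsmem _ ((List.dropLast_sublist ps).subset (List.getLast_mem hdlne))) hpmmem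
                hw'mem h hpmw')
        · rw [List.flatten_append]
          simp only [List.flatten_cons, List.flatten_nil, List.append_nil]
          rw [← List.append_assoc, dropLast_flatten_append_getLast hpsne, hpsflat]
      · have hE := not_not.mp (fun hE => hw'mem ((G.mem_iff _ hw'2).mpr hE))
        obtain ⟨qs, hqs2, hqsmem, hqschain, hqsflat⟩ := hE
        have hqsne : qs ≠ [] := by intro h; rw [h] at hqs2; simp at hqs2
        have hqrmem : G.Mem (qs.getLast hqsne) := hqsmem _ (List.getLast_mem hqsne)
        have hqrw' : (qs.getLast hqsne) <:+ (ps.getLast hpsne) ++ s :=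
          hqsflat ▸ getLast_suffix_flatten hqsne
        have hsw' : s <:+ (ps.getLast hpsne) ++ s := ⟨_, rfl⟩
        have hslen : s.length ≤ (qs.getLast hqsne).length :=
          (ih ((ps.getLast hpsne) ++ s).length (by omega)).1 _ le_rfl qs hqsne
            ⟨hqsmem, hqschain, hqsflat⟩ s hsw' hsm
        have hsqr : s <:+ qs.getLast hqsne := suffix_of_suffix_length_le' hsw' hqrw' hslen
        by_cases hqreq : qs.getLast hqsne = s
        · exfalso
          have hdlqne : qs.dropLast ≠ [] := by
            have hl : qs.dropLast.length = qs.length - 1 := List.length_dropLast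
            intro h; rw [h] at hl; simp at hl; omega
          have hdl : qs.dropLast.flatten = ps.getLast hpsne := by
            have h1 : qs.dropLast.flatten ++ qs.getLast hqsne = (ps.getLast hpsne) ++ s := by
              rw [dropLast_flatten_append_getLast hqsne, hqsflat]
            rw [hqreq] at h1
            exact List.append_cancel_right h1
          have hqsnil : ∀ g ∈ qs.dropLast, g ≠ [] :=
            fun g hg => G.mem_ne_nil g (hqsmem g (List.dropLast_sublist qs |>.subset hg))
          rcases Nat.lt_or_ge qs.dropLast.length 2 with hq1 | hq2
          · -- qs = [q1, s] and q1 = pm, chain gives le pm s, contradiction with hspm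
            have hq1' : qs.dropLast.length = 1 := by
              have := List.length_pos_iff.mpr hdlqne; omega
            obtain ⟨q1, hq⟩ := List.length_eq_one_iff.mp hq1'
            have hq1pm : q1 = ps.getLast hpsne := by
              rw [hq] at hdl; simpa using hdl
            have hjq : G.le q1 (qs.getLast hqsne) := by
              have h := hqschain
              rw [← List.dropLast_append_getLast hqsne, hq] at h
              exact (List.isChain_cons_cons.mp h).1
            rw [hq1pm, hqreq] at hjq
            rcases hjq with h | h
            · exact G.lt_irrefl s hsm (h ▸ hspm)
            · exact G.lt_irrefl s hsm (G.lt_trans s _ s hsm hpmmem hsm hspm h)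
          · -- pm has a factorization with ≥ 2 factors: contradiction with pm ∈ G
            have hpm2 : 2 ≤ (ps.getLast hpsne).length := by
              have h := length_le_length_flatten_of_ne_nil hqsnil
              rw [hdl] at h
              omega
            apply (G.mem_iff _ hpm2).mp hpmmem
            refine ⟨qs.dropLast, hq2, ?_, ?_, hdl⟩
            · intro f hf; exact hqsmem f (List.dropLast_sublist qs |>.subset hf)
            · have h := hqschain
              rw [← List.dropLast_append_getLast hqsne] at h
              exact (List.isChain_append.mp h).1
        · have hsltqr : s.length < (qs.getLast hqsne).length :=
            lt_of_le_of_ne hslen (fun h => hqreq (hsqr.eq_of_length h).symm)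
          have hqrltw' : (qs.getLast hqsne).length < ((ps.getLast hpsne) ++ s).length := by
            have := length_lt_length_flatten hqs2
              (fun g hg => G.mem_ne_nil g (hqsmem g hg)) (List.getLast_mem hqsne)
            rwa [hqsflat] at this
          have hsqr_lt : G.lt s (qs.getLast hqsne) :=
            (ih (qs.getLast hqsne).length (by omega)).2 _ s le_rfl hqrmem hsm hsqr
              (fun h => hqreq h.symm)
          have hqrne : qs.getLast hqsne ≠ p ++ s := by
            intro h
            have hq := congrArg List.length h
            omega
          have hqrx : G.lt (qs.getLast hqsne) (p ++ s) := by
            refine ihc ((p ++ s).length - (qs.getLast hqsne).length) ?_ (p ++ s) _ hxn le_rfl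
              hxm hqrmem (hqrw'.trans hw'x) hqrne
            have hx' : (p ++ s).length = p.length + s.length := List.length_append
            omega
          exact G.lt_trans s _ (p ++ s) hsm hqrmem hxm hsqr_lt hqrx
  intro x s hxn
  exact main (x.length - s.length) x s hxn le_rfl

end StmtEightAux


/-- For any Nyldon-like set `(G, ≺)`: (a) the last factor of a
`G`-factorization of a nonempty word `x` is the longest suffix of `x` lying in `G`;
(b) any proper nonempty suffix `s ∈ G` of a word `x ∈ G` satisfies `s ≺ x`. -/
theorem stmt_8 {A : Type*} [LinearOrder A] [Fintype A] (hA : 2 ≤ Fintype.card A)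
    (G : NyldonLike A) :
    (∀ (x : List A) (fs : List (List A)) (hfs : fs ≠ []), x ≠ [] →
      G.IsFactorization fs x →
        fs.getLast hfs <:+ x ∧ G.Mem (fs.getLast hfs) ∧
          ∀ s : List A, s <:+ x → G.Mem s → s.length ≤ (fs.getLast hfs).length) ∧
    (∀ x s : List A, G.Mem x → G.Mem s → s <:+ x → s ≠ x → G.lt s x) := by
  refine ⟨?_, ?_⟩
  · intro x fs hfs hx hfac
    refine ⟨hfac.2.2 ▸ getLast_suffix_flatten hfs, hfac.1 _ (List.getLast_mem hfs), ?_⟩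
    intro s hs hmem
    exact (nyldon_key G x.length).1 x le_rfl fs hfs hfac s hs hmem
  · intro x s hx hs hsx hne
    exact (nyldon_key G x.length).2 x s le_rfl hx hs hsx hne
end
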